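/- Let F: ℝ → [0,1] be the cumulative distribution function of a probability measure ν on ℝ with finite first moment, and let F⁻¹(v) = inf{y ∈ ℝ : F(y) ≥ v} for v ∈ (0,1) be its generalized inverse. Among all atomic measures of the form ν̂_M = (1/M) Σ_{m=1}^M δ_{e_m}, the Wasserstein-1 distance W₁(ν, ν̂_M) = ∫ |F(x) − F_{ν̂_M}(x)| dx is minimized by choosing e_m = F⁻¹((2m−1)/(2M)) for 1 ≤ m ≤ M. -/

import Mathlib

open MeasureTheory

/-- The CDF of the atomic measure `(1/M) Σ δ_{e m}`. -/
noncomputable def atomicCDF (M : ℕ) (e : Fin M → ℝ) (x : ℝ) : ℝ :=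
  ((Finset.univ.filter (fun m : Fin M => e m ≤ x)).card : ℝ) / M

open Filter Set Topology ProbabilityTheory

lemma card_filter_val_lt (M k : ℕ) :
    ((Finset.univ : Finset (Fin M)).filter (fun m : Fin M => (m : ℕ) < k)).card = min k M := by
  classical
  have h : ((Finset.univ : Finset (Fin M)).filter (fun m : Fin M => (m : ℕ) < k)).card
      = ((Finset.range M).filter (fun n => n < k)).card := by
    refine Finset.card_bij (fun m _ => (m : ℕ)) ?_ ?_ ?_
    · intro a ha
      simp only [Finset.mem_filter, Finset.mem_univ, true_and] at ha
      simp [a.isLt, ha]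
    · intro a _ b _ hab
      exact Fin.ext hab
    · intro b hb
      simp only [Finset.mem_filter, Finset.mem_range] at hb
      exact ⟨⟨b, hb.1⟩, by simp [hb.2], rfl⟩
  have h2 : (Finset.range M).filter (fun n => n < k) = Finset.range (min k M) := by
    ext n
    simp only [Finset.mem_filter, Finset.mem_range, Nat.lt_min]
    tauto
  rw [h, h2, Finset.card_range]

lemma measurable_atomicCDF (M : ℕ) (e : Fin M → ℝ) : Measurable (atomicCDF M e) := by
  unfold atomicCDF
  apply Measurable.div_const
  have h : (fun x => ((Finset.univ.filter (fun m : Fin M => e m ≤ x)).card : ℝ))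
      = fun x => ∑ m : Fin M, if e m ≤ x then (1:ℝ) else 0 := by
    funext x
    rw [Finset.card_filter]
    push_cast
    rfl
  rw [h]
  exact Finset.measurable_sum _ fun m _ =>
    Measurable.ite (measurableSet_Ici (a := e m)) measurable_const measurable_const

lemma atomicCDF_nonneg (M : ℕ) (e : Fin M → ℝ) (x : ℝ) : 0 ≤ atomicCDF M e x :=
  div_nonneg (Nat.cast_nonneg _) (Nat.cast_nonneg _)

lemma atomicCDF_le_one (M : ℕ) (hM : 0 < M) (e : Fin M → ℝ) (x : ℝ) : atomicCDF M e x ≤ 1 := by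
  unfold atomicCDF
  rw [div_le_one (by exact_mod_cast hM)]
  exact_mod_cast (Finset.card_filter_le _ _).trans (by simp)

lemma atomicCDF_eq_zero (M : ℕ) (e : Fin M → ℝ) (x : ℝ) (h : ∀ m, x < e m) :
    atomicCDF M e x = 0 := by
  unfold atomicCDF
  have h2 : (Finset.univ.filter (fun m : Fin M => e m ≤ x)) = ∅ := by
    apply Finset.filter_false_of_mem
    intro m _
    exact not_le.2 (h m)
  simp [h2]

lemma atomicCDF_eq_one (M : ℕ) (hM : 0 < M) (e : Fin M → ℝ) (x : ℝ) (h : ∀ m, e m ≤ x) :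
    atomicCDF M e x = 1 := by
  unfold atomicCDF
  have h2 : (Finset.univ.filter (fun m : Fin M => e m ≤ x)) = Finset.univ := by
    apply Finset.filter_true_of_mem
    intro m _
    exact h m
  rw [h2]
  simp only [Finset.card_univ, Fintype.card_fin]
  exact div_self (by exact_mod_cast hM.ne')

lemma quantile_le_iff (ν : Measure ℝ) [IsProbabilityMeasure ν]
    {F : ℝ → ℝ} (hF : ∀ x, F x = (ν (Set.Iic x)).toReal)
    {q : ℝ} (hq0 : 0 < q) (hq1 : q < 1) (x : ℝ) :
    sInf {y : ℝ | q ≤ F y} ≤ x ↔ q ≤ F x := by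
  have hFeq : ∀ y, F y = cdf ν y := fun y => by rw [hF, cdf_eq_real, measureReal_def]
  simp only [hFeq]
  set S := {y : ℝ | q ≤ cdf ν y} with hS
  have hne : S.Nonempty :=
    ((tendsto_cdf_atTop ν).eventually (eventually_ge_nhds hq1)).exists
  have hbdd : BddBelow S := by
    obtain ⟨y0, hy0⟩ := eventually_atBot.1
      ((tendsto_cdf_atBot ν).eventually (eventually_lt_nhds hq0))
    refine ⟨y0, fun y hy => ?_⟩
    by_contra h
    push_neg at h
    exact absurd hy (not_le.2 (by simpa using hy0 y h.le))
  constructor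
  · intro hle
    have hs : q ≤ cdf ν (sInf S) := by
      have hcont : ContinuousWithinAt (cdf ν) (Ici (sInf S)) (sInf S) :=
        (cdf ν).right_continuous _
      have ht : Tendsto (cdf ν) (𝓝[>] (sInf S)) (𝓝 (cdf ν (sInf S))) :=
        hcont.tendsto.mono_left (nhdsWithin_mono _ Ioi_subset_Ici_self)
      refine ge_of_tendsto ht ?_
      filter_upwards [self_mem_nhdsWithin] with y hy
      obtain ⟨z, hzS, hzy⟩ := exists_lt_of_csInf_lt hne hy
      exact le_trans hzS ((cdf ν).mono hzy.le)
    exact le_trans hs ((cdf ν).mono hle)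
  · intro hx
    exact csInf_le hbdd hx

lemma card_opt (ν : Measure ℝ) [IsProbabilityMeasure ν]
    (F : ℝ → ℝ) (hF : ∀ x, F x = (ν (Set.Iic x)).toReal)
    (M : ℕ) (hM : 0 < M)
    (eopt : Fin M → ℝ)
    (heopt : ∀ m : Fin M,
      eopt m = sInf {y : ℝ | (2 * (m : ℝ) + 1) / (2 * M) ≤ F y}) (x : ℝ) :
    (Finset.univ.filter (fun m : Fin M => eopt m ≤ x)).card
      = (round ((M : ℝ) * F x)).toNat ∧ 0 ≤ round ((M : ℝ) * F x) := by
  have hMpos : (0:ℝ) < M := by exact_mod_cast hM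
  set t := (M:ℝ) * F x with ht
  have hp0 : 0 ≤ F x := by rw [hF]; exact ENNReal.toReal_nonneg
  have hp1 : F x ≤ 1 := by
    rw [hF]
    exact ENNReal.toReal_le_of_le_ofReal zero_le_one (by simpa using prob_le_one)
  have ht0 : 0 ≤ t := mul_nonneg hMpos.le hp0
  have htM : t ≤ (M:ℝ) := by
    calc t ≤ (M:ℝ) * 1 := mul_le_mul_of_nonneg_left hp1 hMpos.le
    _ = M := mul_one _
  have hr0 : 0 ≤ round t := by rw [round_eq]; exact Int.floor_nonneg.2 (by linarith)
  have hrM : round t ≤ (M:ℤ) := by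
    rw [round_eq]
    have h1 : (⌊t + 1/2⌋ : ℤ) ≤ ⌊(M:ℝ) + 1/2⌋ := Int.floor_mono (by linarith)
    have h2 : ⌊(M:ℝ) + 1/2⌋ = (M:ℤ) := by
      rw [Int.floor_eq_iff]
      constructor <;> push_cast <;> linarith
    omega
  refine ⟨?_, hr0⟩
  have hfloor : ⌊t - 1/2⌋ = round t - 1 := by
    rw [round_eq, show t - 1/2 = t + 1/2 - (1:ℤ) by push_cast; ring, Int.floor_sub_intCast]
  have hfilter : (Finset.univ.filter (fun m : Fin M => eopt m ≤ x))
      = (Finset.univ.filter (fun m : Fin M => (m:ℕ) < (round t).toNat)) := by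
    apply Finset.filter_congr
    intro m _
    have hq0' : 0 < (2 * (m:ℝ) + 1) / (2 * M) := by positivity
    have hq1' : (2 * (m:ℝ) + 1) / (2 * M) < 1 := by
      rw [div_lt_one (by positivity)]
      have hlt : (m:ℕ) + 1 ≤ M := m.isLt
      have h5 : (m:ℝ) + 1 ≤ M := by exact_mod_cast hlt
      linarith
    rw [heopt m, quantile_le_iff ν hF hq0' hq1' x, div_le_iff₀ (by positivity)]
    rw [show F x * (2 * M) = 2 * t by rw [ht]; ring]
    constructor
    · intro h
      have h2 : ((m:ℤ):ℝ) ≤ t - 1/2 := by push_cast; linarith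
      have h3 : (m:ℤ) ≤ ⌊t - 1/2⌋ := Int.le_floor.2 h2
      omega
    · intro h
      have h3 : (m:ℤ) ≤ ⌊t - 1/2⌋ := by omega
      have h4 : ((m:ℤ):ℝ) ≤ t - 1/2 := Int.le_floor.1 h3
      push_cast at h4
      linarith
  rw [hfilter, card_filter_val_lt]
  omega

/-- Among atomic measures with `M` equal atoms, the L¹ distance between CDFs
(i.e. the Wasserstein-1 distance to `ν`) is minimized by placing the atoms at
the quantiles `F⁻¹((2m−1)/(2M))`. -/
theorem optimal_quantization
    (ν : Measure ℝ) [IsProbabilityMeasure ν]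
    (hmom : Integrable (fun x : ℝ => |x|) ν)
    (F : ℝ → ℝ) (hF : ∀ x, F x = (ν (Set.Iic x)).toReal)
    (M : ℕ) (hM : 0 < M)
    (eopt : Fin M → ℝ)
    (heopt : ∀ m : Fin M,
      eopt m = sInf {y : ℝ | (2 * (m : ℝ) + 1) / (2 * M) ≤ F y}) :
    ∀ e : Fin M → ℝ,
      ∫ x, |F x - atomicCDF M eopt x| ≤ ∫ x, |F x - atomicCDF M e x| := by
  intro e
  have hMpos : (0:ℝ) < M := by exact_mod_cast hM
  -- pointwise inequality
  have hpt : ∀ x, |F x - atomicCDF M eopt x| ≤ |F x - atomicCDF M e x| := by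
    intro x
    obtain ⟨hc, hr0⟩ := card_opt ν F hF M hM eopt heopt x
    set t := (M:ℝ) * F x with ht
    set j := (Finset.univ.filter (fun m : Fin M => e m ≤ x)).card with hj
    have hGopt : atomicCDF M eopt x = ((round t : ℤ) : ℝ) / M := by
      unfold atomicCDF
      rw [hc]
      congr 1
      exact_mod_cast Int.toNat_of_nonneg hr0
    have hGe : atomicCDF M e x = (j:ℝ) / M := rfl
    have hround : |t - ((round t : ℤ):ℝ)| ≤ |t - ((j:ℤ):ℝ)| := round_le t (j:ℤ)
    rw [hGopt, hGe,
      show F x - ((round t : ℤ):ℝ)/M = (t - ((round t : ℤ):ℝ))/M by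
        rw [ht]; field_simp,
      show F x - (j:ℝ)/M = (t - ((j:ℤ):ℝ))/M by
        rw [ht]; push_cast; field_simp,
      abs_div, abs_div, abs_of_pos hMpos]
    gcongr
  -- measurability
  have hFmeas : Measurable F := by
    have hFeq : F = fun y => cdf ν y := funext fun y => by rw [hF, cdf_eq_real, measureReal_def]
    rw [hFeq]
    exact (cdf ν).mono.measurable
  have hfm : Measurable (fun x => |F x - atomicCDF M eopt x|) :=
    (hFmeas.sub (measurable_atomicCDF M eopt)).abs
  have hgm : Measurable (fun x => |F x - atomicCDF M e x|) :=
    (hFmeas.sub (measurable_atomicCDF M e)).abs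
  set f := fun x => |F x - atomicCDF M eopt x| with hfdef
  set g := fun x => |F x - atomicCDF M e x| with hgdef
  set d := fun x => g x - f x with hd
  haveI : Nonempty (Fin M) := ⟨⟨0, hM⟩⟩
  set a := Finset.univ.inf' Finset.univ_nonempty (fun m : Fin M => min (e m) (eopt m)) with ha
  set b := Finset.univ.sup' Finset.univ_nonempty (fun m : Fin M => max (e m) (eopt m)) with hb
  have hd0 : ∀ x ∉ Icc a b, d x = 0 := by
    intro x hx
    simp only [mem_Icc, not_and_or, not_le] at hx
    rcases hx with hx | hx
    · have h1 : atomicCDF M e x = 0 := atomicCDF_eq_zero _ _ _ (fun m =>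
        lt_of_lt_of_le hx ((Finset.inf'_le _ (Finset.mem_univ m)).trans (min_le_left _ _)))
      have h2 : atomicCDF M eopt x = 0 := atomicCDF_eq_zero _ _ _ (fun m =>
        lt_of_lt_of_le hx ((Finset.inf'_le _ (Finset.mem_univ m)).trans (min_le_right _ _)))
      simp [hd, hfdef, hgdef, h1, h2]
    · have h1 : atomicCDF M e x = 1 := atomicCDF_eq_one _ hM _ _ (fun m =>
        le_of_lt (lt_of_le_of_lt ((le_max_left _ _).trans
          (Finset.le_sup' (fun m : Fin M => max (e m) (eopt m)) (Finset.mem_univ m))) hx))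
      have h2 : atomicCDF M eopt x = 1 := atomicCDF_eq_one _ hM _ _ (fun m =>
        le_of_lt (lt_of_le_of_lt ((le_max_right _ _).trans
          (Finset.le_sup' (fun m : Fin M => max (e m) (eopt m)) (Finset.mem_univ m))) hx))
      simp [hd, hfdef, hgdef, h1, h2]
  have hdb : ∀ x, ‖d x‖ ≤ (Icc a b).indicator (fun _ => (2:ℝ)) x := by
    intro x
    by_cases hx : x ∈ Icc a b
    · rw [indicator_of_mem hx]
      have h1 : ‖d x‖ ≤ |(F x - atomicCDF M e x) - (F x - atomicCDF M eopt x)| := by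
        simpa [hd, hfdef, hgdef] using
          abs_abs_sub_abs_le_abs_sub (F x - atomicCDF M e x) (F x - atomicCDF M eopt x)
      have h2 : (F x - atomicCDF M e x) - (F x - atomicCDF M eopt x)
          = atomicCDF M eopt x - atomicCDF M e x := by ring
      rw [h2] at h1
      refine h1.trans ?_
      have b1 := atomicCDF_nonneg M e x
      have b2 := atomicCDF_le_one M hM e x
      have b3 := atomicCDF_nonneg M eopt x
      have b4 := atomicCDF_le_one M hM eopt x
      rw [abs_le]
      constructor <;> linarith
    · rw [indicator_of_notMem hx, hd0 x hx]
      simp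
  have hdi : Integrable d := by
    refine Integrable.mono' ((integrable_indicator_iff measurableSet_Icc).2 ?_)
      ((hgm.sub hfm).aestronglyMeasurable) (Filter.Eventually.of_forall hdb)
    exact integrableOn_const measure_Icc_lt_top.ne
  by_cases hg : Integrable g
  · have hf : Integrable f := by
      have hfe : f = fun x => g x - d x := by funext x; simp [hd]
      rw [hfe]
      exact hg.sub hdi
    exact integral_mono hf hg hpt
  · have hf : ¬ Integrable f := by
      intro hf
      apply hg
      have hge : g = fun x => f x + d x := by funext x; simp [hd]
      rw [hge]
      exact hf.add hdi
    rw [integral_undef hf, integral_undef hg]
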